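/- arXiv:2003.12403 — 5 statements merged into one kernel-verified Lean document; each statement's English description precedes it below -/
import Mathlib

section
/- Let (Ω,Σ,μ) be a measure space. Then the following are equivalent: (i) μ is semi-finite (every set of infinite measure contains a measurable subset of finite positive measure); (ii) for every measurable V : Ω → 𝕂 for which the multiplication operator V(m) on L²(μ) is bounded, V is essentially bounded and ‖V‖_{L∞(μ)} ≤ ‖V(m)‖. -/
open MeasureTheory ENNReal NNReal

/-- A measure space `(Ω,Σ,μ)` is semi-finite (every set of infinite measure contains a
measurable subset of finite positive measure) if and only if every measurable
`V : Ω → 𝕜` whose multiplication operator `V(m)` on `L²(μ)` is bounded (with bound `C`)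
is essentially bounded with `‖V‖_{L∞(μ)} ≤ C`. -/
theorem semifinite_iff_multiplication_operator_bound {Ω : Type*} [MeasurableSpace Ω]
    {𝕜 : Type*} [RCLike 𝕜] (μ : Measure Ω) :
    (∀ A : Set Ω, MeasurableSet A → μ A = ⊤ →
        ∃ B : Set Ω, MeasurableSet B ∧ B ⊆ A ∧ 0 < μ B ∧ μ B < ⊤) ↔
      (∀ V : Ω → 𝕜, Measurable V → ∀ C : ℝ≥0,
        (∀ f : Ω → 𝕜, MemLp f 2 μ →
          eLpNorm (fun ω => V ω * f ω) 2 μ ≤ (C : ℝ≥0∞) * eLpNorm f 2 μ) →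
        eLpNorm V ⊤ μ ≤ (C : ℝ≥0∞)) := by
  constructor
  · -- semifinite → operator bound controls essential sup
    intro hsf V hV C hC
    have key : ∀ n : ℕ, μ {ω | (C : ℝ≥0∞) + (n : ℝ≥0∞)⁻¹ ≤ (‖V ω‖₊ : ℝ≥0∞)} = 0 := by
      intro n
      by_contra hpos
      set t : ℝ≥0∞ := (C : ℝ≥0∞) + (n : ℝ≥0∞)⁻¹ with ht
      have htC : (C : ℝ≥0∞) < t := by
        refine ENNReal.lt_add_right coe_ne_top ?_
        simp [ENNReal.inv_ne_zero]
      set S := {ω | t ≤ (‖V ω‖₊ : ℝ≥0∞)} with hS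
      have hSm : MeasurableSet S := measurableSet_le measurable_const hV.nnnorm.coe_nnreal_ennreal
      obtain ⟨B, hBm, hBS, hB0, hBfin⟩ :
          ∃ B : Set Ω, MeasurableSet B ∧ B ⊆ S ∧ 0 < μ B ∧ μ B < ⊤ := by
        rcases eq_or_ne (μ S) ⊤ with h | h
        · exact hsf S hSm h
        · exact ⟨S, hSm, subset_rfl, pos_iff_ne_zero.2 hpos, lt_top_iff_ne_top.2 h⟩
      have hf : MemLp (B.indicator fun _ => (1 : 𝕜)) 2 μ :=
        memLp_indicator_const 2 hBm 1 (Or.inr hBfin.ne)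
      have h1 := hC _ hf
      have heq : (fun ω => V ω * (B.indicator fun _ => (1 : 𝕜)) ω) = B.indicator V := by
        funext ω; by_cases h : ω ∈ B <;> simp [h]
      rw [heq, eLpNorm_indicator_const hBm two_ne_zero ENNReal.ofNat_ne_top] at h1
      have hlower : t * μ B ^ (1 / (2 : ℝ≥0∞).toReal) ≤ eLpNorm (B.indicator V) 2 μ := by
        rw [eLpNorm_eq_lintegral_rpow_enorm_toReal two_ne_zero ENNReal.ofNat_ne_top]
        have hint : t ^ (2 : ℝ≥0∞).toReal * μ B ≤
            ∫⁻ x, (‖B.indicator V x‖₊ : ℝ≥0∞) ^ (2 : ℝ≥0∞).toReal ∂μ := by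
          have heq2 : ∀ x, (‖B.indicator V x‖₊ : ℝ≥0∞) ^ (2 : ℝ≥0∞).toReal =
              B.indicator (fun x => (‖V x‖₊ : ℝ≥0∞) ^ (2 : ℝ≥0∞).toReal) x := by
            intro x; by_cases h : x ∈ B <;>
              simp [h, ENNReal.zero_rpow_of_pos, ENNReal.toReal_pos]
          simp_rw [heq2]
          rw [lintegral_indicator hBm]
          calc t ^ (2 : ℝ≥0∞).toReal * μ B = ∫⁻ _ in B, t ^ (2 : ℝ≥0∞).toReal ∂μ := by
                rw [setLIntegral_const]
            _ ≤ ∫⁻ x in B, (‖V x‖₊ : ℝ≥0∞) ^ (2 : ℝ≥0∞).toReal ∂μ :=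
                setLIntegral_mono
                  (ENNReal.continuous_rpow_const.measurable.comp hV.nnnorm.coe_nnreal_ennreal)
                  fun x hx => ENNReal.rpow_le_rpow (hBS hx) ENNReal.toReal_nonneg
        calc t * μ B ^ (1 / (2 : ℝ≥0∞).toReal)
            = (t ^ (2 : ℝ≥0∞).toReal * μ B) ^ (1 / (2 : ℝ≥0∞).toReal) := by
              rw [ENNReal.mul_rpow_of_nonneg _ _ (by positivity), ← ENNReal.rpow_mul]
              norm_num
          _ ≤ _ := ENNReal.rpow_le_rpow hint (by positivity)
      have hle : t * μ B ^ (1 / (2 : ℝ≥0∞).toReal) ≤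
          (C : ℝ≥0∞) * μ B ^ (1 / (2 : ℝ≥0∞).toReal) := by
        refine hlower.trans (h1.trans_eq ?_)
        simp
      have hne0 : μ B ^ (1 / (2 : ℝ≥0∞).toReal) ≠ 0 := by
        simp only [ne_eq, ENNReal.rpow_eq_zero_iff, not_or]
        constructor
        · rintro ⟨h0, -⟩; exact hB0.ne' h0
        · rintro ⟨h0, -⟩; exact hBfin.ne h0
      have hnetop : μ B ^ (1 / (2 : ℝ≥0∞).toReal) ≠ ⊤ := by
        exact ENNReal.rpow_ne_top_of_nonneg (by positivity) hBfin.ne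
      have := (ENNReal.mul_le_mul_iff_left hne0 hnetop).1 hle
      exact absurd this (not_le.2 htC)
    have hae : ∀ᵐ ω ∂μ, (‖V ω‖₊ : ℝ≥0∞) ≤ (C : ℝ≥0∞) := by
      rw [ae_iff]
      refine measure_mono_null ?_
        (measure_iUnion_null fun n : ℕ => key n)
      intro ω hω
      simp only [Set.mem_setOf_eq, not_le] at hω
      simp only [Set.mem_iUnion, Set.mem_setOf_eq]
      rcases eq_or_ne (‖V ω‖₊ : ℝ≥0∞) ⊤ with h | h
      · exact ⟨0, by simp [h]⟩
      · obtain ⟨n, hn⟩ := ENNReal.exists_inv_nat_lt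
          (ne_of_gt (tsub_pos_iff_lt.2 hω))
        exact ⟨n, by
          calc (C : ℝ≥0∞) + (n : ℝ≥0∞)⁻¹ ≤ (C : ℝ≥0∞) + ((‖V ω‖₊ : ℝ≥0∞) - C) :=
                add_le_add le_rfl hn.le
            _ = (‖V ω‖₊ : ℝ≥0∞) := add_tsub_cancel_of_le hω.le⟩
    rw [eLpNorm_exponent_top, eLpNormEssSup]
    exact essSup_le_of_ae_le _ hae
  · -- operator bound controls essential sup → semifinite
    intro H A hA hAtop
    by_contra hcon
    push_neg at hcon
    have hall : ∀ B : Set Ω, MeasurableSet B → B ⊆ A → μ B ≠ ⊤ → μ B = 0 := by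
      intro B hBm hBA hBfin
      by_contra h0
      exact hBfin (top_le_iff.1 (hcon B hBm hBA (pos_iff_ne_zero.2 h0)))
    set V : Ω → 𝕜 := A.indicator fun _ => (1 : 𝕜) with hVdef
    have hVm : Measurable V := measurable_const.indicator hA
    have hbound : ∀ f : Ω → 𝕜, MemLp f 2 μ →
        eLpNorm (fun ω => V ω * f ω) 2 μ ≤ ((0 : ℝ≥0) : ℝ≥0∞) * eLpNorm f 2 μ := by
      intro f hf
      set g := hf.1.mk f with hgdef
      have hgm : StronglyMeasurable g := hf.1.stronglyMeasurable_mk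
      have hfg : f =ᵐ[μ] g := hf.1.ae_eq_mk
      have hg : MemLp g 2 μ := hf.ae_eq hfg
      have hTn : ∀ n : ℕ, μ (A ∩ {ω | ((n : ℝ≥0∞)⁻¹ : ℝ≥0∞) ≤ (‖g ω‖₊ : ℝ≥0∞)}) = 0 := by
        intro n
        rcases Nat.eq_zero_or_pos n with hn | hn
        · subst hn
          convert measure_empty (μ := μ)
          ext ω
          simp only [Set.mem_inter_iff, Set.mem_setOf_eq, Set.mem_empty_iff_false,
            iff_false, not_and, Nat.cast_zero, ENNReal.inv_zero, top_le_iff]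
          exact fun _ => (ENNReal.coe_ne_top ·)
        · have hsub : A ∩ {ω | ((n : ℝ≥0∞)⁻¹ : ℝ≥0∞) ≤ (‖g ω‖₊ : ℝ≥0∞)} ⊆
              {ω | ((n : ℝ≥0∞)⁻¹ : ℝ≥0∞) ≤ (‖g ω‖₊ : ℝ≥0∞)} := Set.inter_subset_right
          have hfin : μ {ω | ((n : ℝ≥0∞)⁻¹ : ℝ≥0∞) ≤ (‖g ω‖₊ : ℝ≥0∞)} < ⊤ := by
            have := hg.meas_ge_lt_top' two_ne_zero ENNReal.ofNat_ne_top
              (ε := (n : ℝ≥0∞)⁻¹) (by simp [hn.ne'])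
            convert this using 2
          refine hall _ (hA.inter (measurableSet_le measurable_const
            hgm.measurable.nnnorm.coe_nnreal_ennreal)) Set.inter_subset_left ?_
          exact ((measure_mono hsub).trans_lt hfin).ne
      have hAg : μ (A ∩ {ω | g ω ≠ 0}) = 0 := by
        refine measure_mono_null ?_ (measure_iUnion_null fun n : ℕ => hTn n)
        rintro ω ⟨hωA, hωg⟩
        obtain ⟨n, hn⟩ := ENNReal.exists_inv_nat_lt (a := (‖g ω‖₊ : ℝ≥0∞)) (by simpa using hωg)
        exact Set.mem_iUnion.2 ⟨n, hωA, hn.le⟩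
      have hzero : (fun ω => V ω * f ω) =ᵐ[μ] (0 : Ω → 𝕜) := by
        have h1 : ∀ᵐ ω ∂μ, ω ∉ A ∩ {ω | g ω ≠ 0} := by
          rw [ae_iff]; simpa [Set.inter_def] using hAg
        filter_upwards [h1, hfg] with ω hω hfgω
        simp only [Set.mem_inter_iff, Set.mem_setOf_eq, not_and, not_not] at hω
        by_cases hωA : ω ∈ A
        · have : f ω = 0 := hfgω.trans (hω hωA)
          simp [this]
        · simp [hVdef, Set.indicator_of_notMem hωA]
      rw [eLpNorm_congr_ae hzero, eLpNorm_zero]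
      exact zero_le
    have := H V hVm 0 hbound
    rw [eLpNorm_exponent_top, ENNReal.coe_zero, le_zero_iff,
      eLpNormEssSup_eq_zero_iff] at this
    have hA0 : μ A = 0 := by
      have hsub : A ⊆ {ω | V ω ≠ 0} := by
        intro ω hω
        simp only [Set.mem_setOf_eq, hVdef, Set.indicator_of_mem hω]
        exact one_ne_zero
      refine measure_mono_null hsub ?_
      rw [← ae_iff] at *
      exact this.mono fun ω h => by simpa using h
    rw [hA0] at hAtop
    exact ENNReal.zero_ne_top hAtop
end

section
/- Let (Ω,Σ,μ) be a semi-finite measure space and V : Ω → 𝕂 measurable. Then the spectrum of the multiplication operator V(m) on L²(μ) equals the essential range of V, namely {λ ∈ 𝕂 : for all ε > 0, μ([|λ−V| < ε]) > 0}. -/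
open MeasureTheory ENNReal NNReal

/-- `lam` belongs to the resolvent set of the (maximally defined) multiplication operator
`V(m)` on `L²(μ)` iff `lam - V(m)` possesses a bounded, everywhere defined two-sided
inverse `S`. -/
noncomputable def mulResolventSet {Ω : Type*} [MeasurableSpace Ω] {𝕜 : Type*} [RCLike 𝕜]
    (μ : Measure Ω) (V : Ω → 𝕜) : Set 𝕜 :=
  {lam | ∃ S : Lp 𝕜 2 μ →L[𝕜] Lp 𝕜 2 μ,
    (∀ f : Lp 𝕜 2 μ, (fun ω => (lam - V ω) * (S f : Lp 𝕜 2 μ) ω) =ᵐ[μ] ⇑f) ∧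
    (∀ f g : Lp 𝕜 2 μ, (⇑g =ᵐ[μ] fun ω => (lam - V ω) * f ω) → S g = f)}

private lemma exists_inverse {Ω : Type*} [MeasurableSpace Ω] {𝕜 : Type*} [RCLike 𝕜]
    (μ : Measure Ω) (V : Ω → 𝕜) (hV : Measurable V) (lam : 𝕜) {ε : ℝ} (hε : 0 < ε)
    (hnull : μ {ω | ‖lam - V ω‖ < ε} = 0) :
    ∃ S : Lp 𝕜 2 μ →L[𝕜] Lp 𝕜 2 μ,
      (∀ f : Lp 𝕜 2 μ, (fun ω => (lam - V ω) * (S f : Lp 𝕜 2 μ) ω) =ᵐ[μ] ⇑f) ∧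
      (∀ f g : Lp 𝕜 2 μ, (⇑g =ᵐ[μ] fun ω => (lam - V ω) * f ω) → S g = f) := by
  set W : Ω → 𝕜 := fun ω => lam - V ω with hWdef
  have hW : Measurable W := measurable_const.sub hV
  have hae : ∀ᵐ ω ∂μ, ε ≤ ‖W ω‖ := by
    rw [ae_iff]
    convert hnull using 2
    ext ω
    simp [not_le, hWdef]
  have hne : ∀ᵐ ω ∂μ, W ω ≠ 0 := by
    filter_upwards [hae] with ω hω
    intro h
    rw [h] at hω
    simp at hω
    linarith
  have key : ∀ f : Lp 𝕜 2 μ, MemLp (fun ω => (W ω)⁻¹ * f ω) 2 μ := by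
    intro f
    have hb : MemLp (fun ω => ε⁻¹ * ‖f ω‖) 2 μ := (Lp.memLp f).norm.const_mul ε⁻¹
    refine MemLp.of_le hb (((hW.inv).aestronglyMeasurable).mul (Lp.aestronglyMeasurable f)) ?_
    filter_upwards [hae] with ω hω
    rw [norm_mul, norm_inv]
    have h1 : ‖W ω‖⁻¹ ≤ ε⁻¹ := inv_anti₀ hε hω
    have h2 : ‖W ω‖⁻¹ * ‖f ω‖ ≤ ε⁻¹ * ‖f ω‖ :=
      mul_le_mul_of_nonneg_right h1 (norm_nonneg _)
    refine h2.trans ?_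
    rw [Real.norm_eq_abs, abs_of_nonneg (by positivity)]
  have keybound : ∀ f : Lp 𝕜 2 μ,
      eLpNorm (fun ω => (W ω)⁻¹ * f ω) 2 μ ≤ ENNReal.ofReal ε⁻¹ * eLpNorm f 2 μ := by
    intro f
    have h1 : eLpNorm (fun ω => (W ω)⁻¹ * f ω) 2 μ
        ≤ eLpNorm (fun ω => ε⁻¹ * ‖f ω‖) 2 μ := by
      refine eLpNorm_mono_ae ?_
      filter_upwards [hae] with ω hω
      rw [norm_mul, norm_inv, Real.norm_eq_abs, abs_of_nonneg (by positivity)]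
      exact mul_le_mul_of_nonneg_right (inv_anti₀ hε hω) (norm_nonneg _)
    have h2 : eLpNorm (fun ω => ε⁻¹ * ‖f ω‖) 2 μ = ‖(ε⁻¹ : ℝ)‖₊ * eLpNorm f 2 μ := by
      have : (fun ω => ε⁻¹ * ‖f ω‖) = (ε⁻¹ : ℝ) • fun ω => ‖f ω‖ := by
        ext ω; simp [smul_eq_mul]
      rw [this, eLpNorm_const_smul, eLpNorm_norm, enorm_eq_nnnorm]
    rw [h2] at h1
    refine h1.trans (le_of_eq ?_)
    congr 1
    rw [← enorm_eq_nnnorm, ← ofReal_norm, Real.norm_eq_abs, abs_of_nonneg (by positivity : (0:ℝ) ≤ ε⁻¹)]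
  let T : Lp 𝕜 2 μ →ₗ[𝕜] Lp 𝕜 2 μ :=
    { toFun := fun f => (key f).toLp _
      map_add' := by
        intro f g
        apply Lp.ext
        filter_upwards [MemLp.coeFn_toLp (key (f + g)), MemLp.coeFn_toLp (key f),
          MemLp.coeFn_toLp (key g), Lp.coeFn_add f g,
          Lp.coeFn_add ((key f).toLp _) ((key g).toLp _)] with ω h1 h2 h3 h4 h5
        rw [h1, h4, Pi.add_apply, h5, Pi.add_apply, h2, h3, mul_add]
      map_smul' := by
        intro c f
        apply Lp.ext
        filter_upwards [MemLp.coeFn_toLp (key (c • f)), MemLp.coeFn_toLp (key f),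
          Lp.coeFn_smul c f, Lp.coeFn_smul c ((key f).toLp _)] with ω h1 h2 h3 h4
        rw [RingHom.id_apply, h1, h3, Pi.smul_apply, h4, Pi.smul_apply, h2]
        simp only [smul_eq_mul]
        ring }
  have Tbound : ∀ f : Lp 𝕜 2 μ, ‖T f‖ ≤ ε⁻¹ * ‖f‖ := by
    intro f
    have hTf : T f = (key f).toLp _ := rfl
    rw [hTf, Lp.norm_toLp]
    have h1 := keybound f
    have h2 : (ENNReal.ofReal ε⁻¹ * eLpNorm (⇑f) 2 μ) ≠ ⊤ :=
      ENNReal.mul_ne_top ENNReal.ofReal_ne_top (Lp.eLpNorm_ne_top f)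
    calc (eLpNorm (fun ω => (W ω)⁻¹ * f ω) 2 μ).toReal
        ≤ (ENNReal.ofReal ε⁻¹ * eLpNorm (⇑f) 2 μ).toReal := ENNReal.toReal_mono h2 h1
      _ = ε⁻¹ * ‖f‖ := by
          rw [ENNReal.toReal_mul, ENNReal.toReal_ofReal (by positivity), Lp.norm_def]
  refine ⟨T.mkContinuous ε⁻¹ Tbound, ?_, ?_⟩
  · intro f
    have hSf : ⇑(T.mkContinuous ε⁻¹ Tbound f) =ᵐ[μ] fun ω => (W ω)⁻¹ * f ω :=
      MemLp.coeFn_toLp (key f)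
    filter_upwards [hSf, hne] with ω h1 h2
    simp only [h1]
    rw [← mul_assoc, mul_inv_cancel₀ h2, one_mul]
  · intro f g hg
    apply Lp.ext
    have hSg : ⇑(T.mkContinuous ε⁻¹ Tbound g) =ᵐ[μ] fun ω => (W ω)⁻¹ * g ω :=
      MemLp.coeFn_toLp (key g)
    filter_upwards [hSg, hg, hne] with ω h1 h2 h3
    rw [h1, h2, ← mul_assoc, inv_mul_cancel₀ h3, one_mul]

private lemma null_of_inverse {Ω : Type*} [MeasurableSpace Ω] {𝕜 : Type*} [RCLike 𝕜]
    (μ : Measure Ω)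
    (hsemifinite : ∀ A : Set Ω, MeasurableSet A → μ A = ⊤ →
      ∃ B : Set Ω, MeasurableSet B ∧ B ⊆ A ∧ 0 < μ B ∧ μ B < ⊤)
    (V : Ω → 𝕜) (hV : Measurable V) (lam : 𝕜)
    (S : Lp 𝕜 2 μ →L[𝕜] Lp 𝕜 2 μ)
    (hS1 : ∀ f : Lp 𝕜 2 μ, (fun ω => (lam - V ω) * (S f : Lp 𝕜 2 μ) ω) =ᵐ[μ] ⇑f)
    (hS2 : ∀ f g : Lp 𝕜 2 μ, (⇑g =ᵐ[μ] fun ω => (lam - V ω) * f ω) → S g = f) :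
    ∃ ε > (0 : ℝ), μ {ω | ‖lam - V ω‖ < ε} = 0 := by
  set W : Ω → 𝕜 := fun ω => lam - V ω with hWdef
  have hW : Measurable W := measurable_const.sub hV
  set ε : ℝ := (‖S‖ + 1)⁻¹ with hεdef
  have hε : 0 < ε := by positivity
  refine ⟨ε, hε, ?_⟩
  by_contra hne
  set A : Set Ω := {ω | ‖W ω‖ < ε} with hAdef
  have hA : MeasurableSet A := measurableSet_lt hW.norm measurable_const
  obtain ⟨B, hB, hBA, hB0, hBfin⟩ : ∃ B, MeasurableSet B ∧ B ⊆ A ∧ 0 < μ B ∧ μ B < ⊤ := by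
    rcases eq_or_ne (μ A) ⊤ with h | h
    · exact hsemifinite A hA h
    · exact ⟨A, hA, subset_rfl, pos_iff_ne_zero.mpr hne, lt_top_iff_ne_top.mpr h⟩
  set f₀ : Ω → 𝕜 := B.indicator fun _ => (1 : 𝕜) with hf₀def
  have hf0 : MemLp f₀ 2 μ := memLp_indicator_const 2 hB 1 (Or.inr hBfin.ne)
  set f : Lp 𝕜 2 μ := hf0.toLp _ with hfdef
  have hbound : ∀ ω, ‖W ω * f₀ ω‖ ≤ ε * ‖f₀ ω‖ := by
    intro ω
    by_cases hω : ω ∈ B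
    · rw [norm_mul]
      exact mul_le_mul_of_nonneg_right (le_of_lt (hBA hω)) (norm_nonneg _)
    · simp [hf₀def, Set.indicator_of_notMem hω]
  have hg0 : MemLp (fun ω => W ω * f₀ ω) 2 μ := by
    refine MemLp.of_le (hf0.norm.const_mul ε) (hW.aestronglyMeasurable.mul hf0.1) ?_
    filter_upwards with ω
    refine (hbound ω).trans (le_of_eq ?_)
    rw [Real.norm_eq_abs, abs_of_nonneg (by positivity)]
  set g : Lp 𝕜 2 μ := hg0.toLp _ with hgdef
  have hSg : S g = f := by
    refine hS2 f g ?_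
    filter_upwards [hg0.coeFn_toLp, hf0.coeFn_toLp] with ω h1 h2
    rw [h1, h2]
  have hfpos : 0 < ‖f‖ := by
    rw [hfdef, Lp.norm_toLp, hf₀def,
      eLpNorm_indicator_const hB two_ne_zero ENNReal.ofNat_ne_top]
    refine ENNReal.toReal_pos ?_ ?_
    · refine (ENNReal.mul_pos ?_ ?_).ne'
      · simp
      · exact (ENNReal.rpow_pos hB0 hBfin.ne).ne'
    · refine ENNReal.mul_ne_top (by simp) ?_
      exact ENNReal.rpow_ne_top_of_nonneg (by positivity) hBfin.ne
  have hgle : ‖g‖ ≤ ε * ‖f‖ := by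
    rw [hgdef, Lp.norm_toLp]
    have h1 : eLpNorm (fun ω => W ω * f₀ ω) 2 μ ≤ eLpNorm (fun ω => ε * ‖f₀ ω‖) 2 μ := by
      refine eLpNorm_mono fun ω => ?_
      refine (hbound ω).trans (le_of_eq ?_)
      rw [Real.norm_eq_abs, abs_of_nonneg (by positivity)]
    have h2 : eLpNorm (fun ω => ε * ‖f₀ ω‖) 2 μ = ‖ε‖₊ * eLpNorm f₀ 2 μ := by
      have : (fun ω => ε * ‖f₀ ω‖) = ε • fun ω => ‖f₀ ω‖ := by ext ω; simp [smul_eq_mul]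
      rw [this, eLpNorm_const_smul, eLpNorm_norm, enorm_eq_nnnorm]
    rw [h2] at h1
    have h3 : (‖ε‖₊ * eLpNorm f₀ 2 μ : ℝ≥0∞) ≠ ⊤ :=
      ENNReal.mul_ne_top ENNReal.coe_ne_top hf0.2.ne
    calc (eLpNorm (fun ω => W ω * f₀ ω) 2 μ).toReal
        ≤ ((‖ε‖₊ : ℝ≥0∞) * eLpNorm f₀ 2 μ).toReal := ENNReal.toReal_mono h3 h1
      _ = ε * ‖f‖ := by
          rw [ENNReal.toReal_mul, ENNReal.coe_toReal, coe_nnnorm, Real.norm_eq_abs,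
            abs_of_nonneg hε.le, hfdef, Lp.norm_toLp]
  have hfle : ‖f‖ ≤ ‖S‖ * ‖g‖ := by
    rw [← hSg]
    exact S.le_opNorm g
  have hlt : ‖S‖ * ε < 1 := by
    have hpos : (0:ℝ) < ‖S‖ + 1 := by positivity
    rw [hεdef, inv_eq_one_div, mul_one_div, div_lt_one hpos]
    linarith
  nlinarith [norm_nonneg S, norm_nonneg g]

/-- For a semi-finite measure space `(Ω,Σ,μ)` and a measurable `V : Ω → 𝕜`, the spectrum
of the multiplication operator `V(m)` on `L²(μ)` equals the essential range of `V`. -/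
theorem spectrum_multiplication_eq_essRange {Ω : Type*} [MeasurableSpace Ω]
    {𝕜 : Type*} [RCLike 𝕜] (μ : Measure Ω)
    (hsemifinite : ∀ A : Set Ω, MeasurableSet A → μ A = ⊤ →
      ∃ B : Set Ω, MeasurableSet B ∧ B ⊆ A ∧ 0 < μ B ∧ μ B < ⊤)
    (V : Ω → 𝕜) (hV : Measurable V) :
    (mulResolventSet μ V)ᶜ =
      {lam : 𝕜 | ∀ ε > (0 : ℝ), 0 < μ {ω | ‖lam - V ω‖ < ε}} := by
  ext lam
  simp only [Set.mem_compl_iff, Set.mem_setOf_eq]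
  constructor
  · intro h ε hε
    by_contra hc
    push_neg at hc
    have hnull : μ {ω | ‖lam - V ω‖ < ε} = 0 := le_antisymm hc zero_le
    exact h (exists_inverse μ V hV lam hε hnull)
  · intro h hmem
    obtain ⟨S, hS1, hS2⟩ := hmem
    obtain ⟨ε, hε, hnull⟩ := null_of_inverse μ hsemifinite V hV lam S hS1 hS2
    exact absurd (h ε hε) (by simp [hnull])
end

section
/- Let H be a Hilbert space, N₀, N₁ ∈ L(H) with N₀ selfadjoint. Assume there exist c₀, c₁ > 0 such that ⟨x, N₀x⟩ ≥ c₀‖x‖² for all x ∈ ran(N₀) and Re⟨y, N₁y⟩ ≥ c₁‖y‖² for all y ∈ ker(N₀). Then for all 0 < c₁' < c₁ there exists ν₀ > 0 such that for all ν ≥ ν₀ and all z ∈ H one has ν⟨z, N₀z⟩ + Re⟨z, N₁z⟩ ≥ c₁'‖z‖². -/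
open RCLike

set_option maxHeartbeats 1000000

/-- Let `N₀, N₁` be bounded operators on a Hilbert space `H` with `N₀` selfadjoint,
`⟨x, N₀x⟩ ≥ c₀‖x‖²` on `ran N₀` and `Re⟨y, N₁y⟩ ≥ c₁‖y‖²` on `ker N₀`. Then for every
`0 < c₁' < c₁` there is `ν₀ > 0` such that for all `ν ≥ ν₀` and all `z`:
`ν⟨z, N₀z⟩ + Re⟨z, N₁z⟩ ≥ c₁'‖z‖²`. -/
theorem shifted_positivity {𝕜 H : Type*} [RCLike 𝕜] [NormedAddCommGroup H]
    [InnerProductSpace 𝕜 H] [CompleteSpace H] (N₀ N₁ : H →L[𝕜] H)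
    (hsa : IsSelfAdjoint N₀) (c₀ c₁ : ℝ) (hc₀ : 0 < c₀) (hc₁ : 0 < c₁)
    (hran : ∀ x ∈ LinearMap.range (N₀ : H →ₗ[𝕜] H), c₀ * ‖x‖ ^ 2 ≤ RCLike.re (inner 𝕜 x (N₀ x) : 𝕜))
    (hker : ∀ y ∈ LinearMap.ker (N₀ : H →ₗ[𝕜] H), c₁ * ‖y‖ ^ 2 ≤ RCLike.re (inner 𝕜 y (N₁ y) : 𝕜)) :
    ∀ c₁' : ℝ, 0 < c₁' → c₁' < c₁ → ∃ ν₀ : ℝ, 0 < ν₀ ∧ ∀ ν : ℝ, ν₀ ≤ ν → ∀ z : H,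
      c₁' * ‖z‖ ^ 2 ≤
        ν * RCLike.re (inner 𝕜 z (N₀ z) : 𝕜) + RCLike.re (inner 𝕜 z (N₁ z) : 𝕜) := by
  intro c₁' hc₁'pos hc₁'lt
  have hsym : (N₀ : H →ₗ[𝕜] H).IsSymmetric := hsa.isSymmetric
  set K : Submodule 𝕜 H := LinearMap.ker (N₀ : H →ₗ[𝕜] H) with hK
  haveI : CompleteSpace K := (ContinuousLinearMap.isClosed_ker N₀).completeSpace_coe
  -- ker N₀ = (range N₀)ᗮ
  have hker_ortho : K = (LinearMap.range (N₀ : H →ₗ[𝕜] H))ᗮ := by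
    ext v
    rw [Submodule.mem_orthogonal]
    constructor
    · intro hv u hu
      obtain ⟨w, rfl⟩ := hu
      have : (inner 𝕜 (N₀ w) v : 𝕜) = inner 𝕜 w (N₀ v) := hsym w v
      have hv' : N₀ v = 0 := hv
      exact this.trans (by rw [hv', inner_zero_right])
    · intro hv
      have h0 : (inner 𝕜 (N₀ (N₀ v)) v : 𝕜) = 0 := hv _ ⟨N₀ v, rfl⟩
      have h1 : (inner 𝕜 (N₀ v) (N₀ v) : 𝕜) = inner 𝕜 (N₀ (N₀ v)) v := (hsym (N₀ v) v).symm
      exact inner_self_eq_zero.mp (h1.trans h0)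
  -- extend the range estimate to Kᗮ (= closure of range N₀)
  have hperp : ∀ x ∈ Kᗮ, c₀ * ‖x‖ ^ 2 ≤ RCLike.re (inner 𝕜 x (N₀ x) : 𝕜) := by
    intro x hx
    have hclos : Kᗮ = (LinearMap.range (N₀ : H →ₗ[𝕜] H)).topologicalClosure := by
      rw [hker_ortho, Submodule.orthogonal_orthogonal_eq_closure]
    rw [hclos] at hx
    have hcont : Continuous fun x : H =>
        RCLike.re (inner 𝕜 x (N₀ x) : 𝕜) - c₀ * ‖x‖ ^ 2 := by
      apply Continuous.sub
      · exact RCLike.continuous_re.comp (continuous_id.inner N₀.continuous)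
      · exact continuous_const.mul ((continuous_norm).pow 2)
    have hclosed : IsClosed {u : H |
        (0 : ℝ) ≤ RCLike.re (inner 𝕜 u (N₀ u) : 𝕜) - c₀ * ‖u‖ ^ 2} :=
      isClosed_le continuous_const hcont
    have hsubset : (LinearMap.range (N₀ : H →ₗ[𝕜] H) : Set H) ⊆
        {u : H | (0 : ℝ) ≤ RCLike.re (inner 𝕜 u (N₀ u) : 𝕜) - c₀ * ‖u‖ ^ 2} := by
      intro u hu
      have := hran u hu
      simp only [Set.mem_setOf_eq, sub_nonneg]
      exact this
    have hmem : x ∈ {u : H | (0 : ℝ) ≤ RCLike.re (inner 𝕜 u (N₀ u) : 𝕜) - c₀ * ‖u‖ ^ 2} :=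
      hclosed.closure_subset_iff.mpr hsubset hx
    have := hmem
    simp only [Set.mem_setOf_eq, sub_nonneg] at this
    exact this
  -- constants
  set M : ℝ := ‖N₁‖ + 1 with hM
  have hMpos : 0 < M := by positivity
  set ε : ℝ := c₁ - c₁' with hε
  have hεpos : 0 < ε := by simp [hε]; linarith
  refine ⟨max 1 ((c₁' + M + M ^ 2 / ε) / c₀), lt_of_lt_of_le one_pos (le_max_left _ _), ?_⟩
  intro ν hν z
  have hν1 : (1 : ℝ) ≤ ν := le_trans (le_max_left _ _) hν
  have hν2 : (c₁' + M + M ^ 2 / ε) / c₀ ≤ ν := le_trans (le_max_right _ _) hν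
  have hνc : c₁' + M + M ^ 2 / ε ≤ ν * c₀ := by
    rw [div_le_iff₀ hc₀] at hν2; linarith
  -- decompose z
  set y : H := (K.orthogonalProjectionOnto z : H) with hy
  set x : H := z - y with hx
  have hxK : x ∈ Kᗮ := Submodule.sub_starProjection_mem_orthogonal (K := K) z
  have hyK : y ∈ K := (K.orthogonalProjectionOnto z).2
  have hzxy : z = x + y := by simp [hx]
  have hN₀y : N₀ y = 0 := hyK
  have hinnerxy : (inner 𝕜 x y : 𝕜) = 0 := Submodule.inner_left_of_mem_orthogonal hyK hxK
  -- norm splits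
  have hnorm : ‖z‖ ^ 2 = ‖x‖ ^ 2 + ‖y‖ ^ 2 := by
    rw [hzxy, @norm_add_sq 𝕜, hinnerxy, map_zero]; ring
  -- first term
  have hterm0 : RCLike.re (inner 𝕜 z (N₀ z) : 𝕜) = RCLike.re (inner 𝕜 x (N₀ x) : 𝕜) := by
    have hN₀z : N₀ z = N₀ x := by rw [hzxy, map_add, hN₀y, add_zero]
    have hyN₀x : (inner 𝕜 y (N₀ x) : 𝕜) = 0 := by
      have h : (inner 𝕜 y (N₀ x) : 𝕜) = inner 𝕜 (N₀ y) x := (hsym y x).symm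
      rw [hN₀y, inner_zero_left] at h
      exact h
    rw [hN₀z, hzxy, inner_add_left, hyN₀x, add_zero]
  have h0 : ν * c₀ * ‖x‖ ^ 2 ≤ ν * RCLike.re (inner 𝕜 z (N₀ z) : 𝕜) := by
    rw [hterm0, mul_assoc]
    exact mul_le_mul_of_nonneg_left (hperp x hxK) (by linarith)
  -- second term bounds
  have hbnd : ∀ a b : H, |RCLike.re (inner 𝕜 a (N₁ b) : 𝕜)| ≤ M * ‖a‖ * ‖b‖ := by
    intro a b
    calc |RCLike.re (inner 𝕜 a (N₁ b) : 𝕜)| ≤ ‖(inner 𝕜 a (N₁ b) : 𝕜)‖ := RCLike.abs_re_le_norm _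
      _ ≤ ‖a‖ * ‖N₁ b‖ := norm_inner_le_norm _ _
      _ ≤ ‖a‖ * (‖N₁‖ * ‖b‖) :=
        mul_le_mul_of_nonneg_left (N₁.le_opNorm b) (norm_nonneg a)
      _ ≤ M * ‖a‖ * ‖b‖ := by
        have h1 : ‖N₁‖ ≤ M := by simp [hM]
        have := mul_le_mul_of_nonneg_right
          (mul_le_mul_of_nonneg_left h1 (norm_nonneg a)) (norm_nonneg b)
        nlinarith [norm_nonneg a, norm_nonneg b]
  have hterm1 : c₁ * ‖y‖ ^ 2 - M * ‖x‖ * ‖z‖ - M * ‖y‖ * ‖x‖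
      ≤ RCLike.re (inner 𝕜 z (N₁ z) : 𝕜) := by
    have e2 : (inner 𝕜 y (N₁ z) : 𝕜) = inner 𝕜 y (N₁ x) + inner 𝕜 y (N₁ y) := by
      rw [hzxy, map_add, inner_add_right]
    have e1 : (inner 𝕜 z (N₁ z) : 𝕜)
        = inner 𝕜 x (N₁ z) + (inner 𝕜 y (N₁ x) + inner 𝕜 y (N₁ y)) := by
      nth_rewrite 1 [hzxy]
      rw [inner_add_left, e2]
    have hsplit : RCLike.re (inner 𝕜 z (N₁ z) : 𝕜) =
        RCLike.re (inner 𝕜 x (N₁ z) : 𝕜) + RCLike.re (inner 𝕜 y (N₁ x) : 𝕜)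
          + RCLike.re (inner 𝕜 y (N₁ y) : 𝕜) := by
      rw [e1, map_add, map_add]; ring
    have h1 := abs_le.mp (hbnd x z)
    have h2 := abs_le.mp (hbnd y x)
    have h3 := hker y hyK
    rw [hsplit]; linarith
  have hzle : ‖z‖ ≤ ‖x‖ + ‖y‖ := by rw [hzxy]; exact norm_add_le x y
  -- Peter–Paul
  have hpp : 2 * M * ‖x‖ * ‖y‖ ≤ ε * ‖y‖ ^ 2 + M ^ 2 / ε * ‖x‖ ^ 2 := by
    have hεne : ε ≠ 0 := ne_of_gt hεpos
    have hfs : ε * (ε * ‖y‖ ^ 2 + M ^ 2 / ε * ‖x‖ ^ 2 - 2 * M * ‖x‖ * ‖y‖)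
        = (ε * ‖y‖ - M * ‖x‖) ^ 2 := by
      field_simp; ring
    nlinarith [hfs, sq_nonneg (ε * ‖y‖ - M * ‖x‖), hεpos]
  have hMxz : M * ‖x‖ * ‖z‖ ≤ M * ‖x‖ ^ 2 + M * ‖x‖ * ‖y‖ := by
    have := mul_le_mul_of_nonneg_left hzle (by positivity : (0:ℝ) ≤ M * ‖x‖)
    nlinarith
  -- combine
  have hx2 : (c₁' + M + M ^ 2 / ε) * ‖x‖ ^ 2 ≤ ν * c₀ * ‖x‖ ^ 2 :=
    mul_le_mul_of_nonneg_right hνc (sq_nonneg _)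
  rw [hnorm]
  have hεy : ε * ‖y‖ ^ 2 = (c₁ - c₁') * ‖y‖ ^ 2 := by rw [hε]
  clear_value x y M ε
  linarith [h0, hterm1, hpp, hMxz, hx2, hεy]
end

section
/- Let z ∈ ℂ with Re z ≥ ν > 0 and α ∈ [0,1]. Then Re(z^α) ≥ (Re z)^α ≥ ν^α, where z^α is the principal branch of the fractional power (with argument in (−π, π)). -/
open Real Complex


/-- For `z ∈ ℂ` with `Re z ≥ ν > 0` and `α ∈ [0,1]`:
`Re(z^α) ≥ (Re z)^α ≥ ν^α`, where `z^α` is the principal branch of the fractional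
power. -/
theorem re_cpow_ge_rpow (ν : ℝ) (hν : 0 < ν) (z : ℂ) (hz : ν ≤ z.re) (α : ℝ)
    (hα : α ∈ Set.Icc (0 : ℝ) 1) :
    z.re ^ α ≤ (z ^ (α : ℂ)).re ∧ ν ^ α ≤ z.re ^ α := by
  obtain ⟨hα0, hα1⟩ := hα
  have hre : 0 < z.re := lt_of_lt_of_le hν hz
  have hz0 : z ≠ 0 := fun h => by simp [h] at hre
  refine ⟨?_, Real.rpow_le_rpow hν.le hz hα0⟩
  set θ := Complex.arg z with hθ
  have habs : |θ| < π / 2 := Complex.abs_arg_lt_pi_div_two_iff.2 (Or.inl hre)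
  have hθmem : θ ∈ Set.Icc (-(π/2)) (π/2) := ⟨by cases abs_lt.1 habs; linarith, (le_of_lt (abs_lt.1 habs).2)⟩
  have hcosθ : 0 < Real.cos θ :=
    Real.cos_pos_of_mem_Ioo ⟨(abs_lt.1 habs).1, (abs_lt.1 habs).2⟩
  have hcos1 : Real.cos θ ≤ 1 := Real.cos_le_one θ
  -- concavity: cos (α θ) ≥ α cos θ + (1-α)
  have hconc : α * Real.cos θ + (1 - α) * 1 ≤ Real.cos (α * θ) := by
    have h0 : (0:ℝ) ∈ Set.Icc (-(π/2)) (π/2) := by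
      constructor <;> [linarith [Real.pi_pos]; linarith [Real.pi_pos]]
    have := strictConcaveOn_cos_Icc.concaveOn.2 hθmem h0 hα0 (sub_nonneg.2 hα1) (by ring : α + (1 - α) = 1)
    simpa [smul_eq_mul, Real.cos_zero] using this
  have hgm : Real.cos θ ^ α * 1 ^ (1 - α) ≤ α * Real.cos θ + (1 - α) * 1 :=
    Real.geom_mean_le_arith_mean2_weighted hα0 (by linarith) hcosθ.le zero_le_one (by ring)
  have hkey : Real.cos θ ^ α ≤ Real.cos (α * θ) := by
    calc Real.cos θ ^ α = Real.cos θ ^ α * 1 ^ (1-α) := by simp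
    _ ≤ _ := hgm.trans hconc
  -- compute Re (z ^ α)
  have habs0 : 0 < ‖z‖ := norm_pos_iff.mpr hz0
  have hre_eq : (z ^ (α : ℂ)).re = ‖z‖ ^ α * Real.cos (α * θ) := by
    rw [Complex.cpow_def_of_ne_zero hz0, Complex.exp_re]
    have h1 : (Complex.log z * α).re = Real.log (‖z‖) * α := by
      simp [Complex.log_re]
    have h2 : (Complex.log z * α).im = θ * α := by
      simp [Complex.log_im, hθ]
    rw [h1, h2, Real.rpow_def_of_pos habs0, mul_comm θ α]
  rw [hre_eq]
  have hzre : z.re = ‖z‖ * Real.cos θ := by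
    rw [Complex.cos_arg hz0]; field_simp
  rw [hzre, Real.mul_rpow habs0.le hcosθ.le]
  exact mul_le_mul_of_nonneg_left hkey (Real.rpow_nonneg habs0.le α)
end

section
/- Let M₀, M₁ ∈ ℂ^{n×n} with the matrix pair (M₀,M₁) regular, i.e., det(zM₀+M₁) is not identically zero. Then there exist invertible P, Q ∈ ℂ^{n×n}, k ∈ {0,…,n}, C ∈ ℂ^{k×k}, and a nilpotent N ∈ ℂ^{(n−k)×(n−k)} such that P M₀ Q = diag(1_k, N) and P M₁ Q = diag(C, 1_{n−k}) (quasi-Weierstraß normal form). -/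
open Matrix LinearMap Module

/-- Fitting decomposition at the matrix level. -/
theorem fitting_matrix (n : ℕ) (T : Matrix (Fin n) (Fin n) ℂ) :
    ∃ (k : ℕ) (hk : k ≤ n) (S S' : Matrix (Fin n) (Fin n) ℂ)
      (B : Matrix (Fin k) (Fin k) ℂ) (Nm : Matrix (Fin (n - k)) (Fin (n - k)) ℂ),
      S * S' = 1 ∧ S' * S = 1 ∧ IsUnit B.det ∧ IsNilpotent Nm ∧
      T = S * (Matrix.reindex (finSumFinEquiv.trans (finCongr (Nat.add_sub_cancel' hk)))
        (finSumFinEquiv.trans (finCongr (Nat.add_sub_cancel' hk)))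
        (Matrix.fromBlocks B 0 0 Nm)) * S' := by
  classical
  set std := Pi.basisFun ℂ (Fin n) with hstd
  set φ : Module.End ℂ (Fin n → ℂ) := Matrix.toLin std std T with hφ
  have hd : finrank ℂ (Fin n → ℂ) = n := Module.finrank_fin_fun ℂ
  set V : Submodule ℂ (Fin n → ℂ) := ⨆ i : ℕ, LinearMap.ker (φ ^ i) with hV
  set W : Submodule ℂ (Fin n → ℂ) := ⨅ i : ℕ, LinearMap.range (φ ^ i) with hW
  have hVW : IsCompl V W := LinearMap.isCompl_iSup_ker_pow_iInf_range_pow φ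
  have hVkern : V = LinearMap.ker (φ ^ n) := by
    apply le_antisymm
    · refine iSup_le fun i => ?_
      have h1 := Module.End.ker_pow_le_ker_pow_finrank φ i
      rwa [hd] at h1
    · exact le_iSup (fun i => LinearMap.ker (φ ^ i)) n
  have hφV : ∀ x ∈ V, φ x ∈ V := by
    rw [hVkern]
    intro x hx
    rw [LinearMap.mem_ker] at hx ⊢
    calc (φ ^ n) (φ x) = (φ ^ n * φ) x := rfl
      _ = (φ * φ ^ n) x := by rw [← pow_succ, ← pow_succ']
      _ = φ ((φ ^ n) x) := rfl
      _ = 0 := by rw [hx, map_zero]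
  have hφW : ∀ x ∈ W, φ x ∈ W := by
    intro x hx
    simp only [hW, Submodule.mem_iInf, LinearMap.mem_range] at hx ⊢
    intro i
    obtain ⟨y, hy⟩ := hx i
    exact ⟨φ y, by rw [← Module.End.mul_apply, ← pow_succ, pow_succ', Module.End.mul_apply, hy]⟩
  set F : Module.End ℂ W := φ.restrict hφW with hF
  set G : Module.End ℂ V := φ.restrict hφV with hG
  have hFinj : ∀ x : W, F x = 0 → x = 0 := by
    intro x hx
    have hx1 : φ (x : Fin n → ℂ) = 0 := by
      have := congrArg (Subtype.val) hx
      simpa [hF, LinearMap.restrict_coe_apply] using this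
    have hxV : (x : Fin n → ℂ) ∈ V := by
      refine (le_iSup (fun i => LinearMap.ker (φ ^ i)) 1) ?_
      simp [LinearMap.mem_ker, pow_one, hx1]
    have : (x : Fin n → ℂ) ∈ V ⊓ W := ⟨hxV, x.2⟩
    rw [hVW.inf_eq_bot] at this
    exact Subtype.ext (by simpa using this)
  have hFdet : LinearMap.det F ≠ 0 :=
    ((LinearMap.not_hasEigenvalue_zero_tfae F).out 3 5).mpr hFinj
  have hGn : G ^ n = 0 := by
    ext x
    have key : ∀ (m : ℕ) (x : V), ((G ^ m) x : Fin n → ℂ) = (φ ^ m) (x : Fin n → ℂ) := by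
      intro m
      induction m with
      | zero => intro x; simp
      | succ m ih =>
        intro x
        rw [pow_succ', pow_succ', Module.End.mul_apply, Module.End.mul_apply]
        rw [← ih x]
        simp [hG, LinearMap.restrict_coe_apply]
    have hxk : (x : Fin n → ℂ) ∈ LinearMap.ker (φ ^ n) := hVkern ▸ x.2
    rw [LinearMap.mem_ker] at hxk
    simp [key n x, hxk]
  -- dimensions
  have hkle : finrank ℂ W ≤ n := by
    have := Submodule.finrank_le W
    rwa [hd] at this
  refine ⟨finrank ℂ W, hkle, ?_⟩
  have hdimV : finrank ℂ V = n - finrank ℂ W := by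
    have := Submodule.finrank_add_eq_of_isCompl hVW
    rw [hd] at this
    omega
  set k := finrank ℂ W with hkdef
  -- bases
  set bW : Basis (Fin k) ℂ W := Module.finBasis ℂ W with hbW
  set bV : Basis (Fin (n - k)) ℂ V := (Module.finBasis ℂ V).reindex (finCongr hdimV) with hbV
  set e : (W × V) ≃ₗ[ℂ] (Fin n → ℂ) := Submodule.prodEquivOfIsCompl W V hVW.symm with he
  set b : Basis (Fin k ⊕ Fin (n - k)) ℂ (Fin n → ℂ) := (bW.prod bV).map e with hb
  set eqv : (Fin k ⊕ Fin (n - k)) ≃ Fin n :=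
    finSumFinEquiv.trans (finCongr (Nat.add_sub_cancel' hkle)) with heqv
  set bb : Basis (Fin n) ℂ (Fin n → ℂ) := b.reindex eqv with hbb
  set Bm : Matrix (Fin k) (Fin k) ℂ := LinearMap.toMatrix bW bW F with hBm
  set Nm : Matrix (Fin (n - k)) (Fin (n - k)) ℂ := LinearMap.toMatrix bV bV G with hNm
  have hψ : F.prodMap G = e.symm.conj φ := by
    apply LinearMap.ext
    rintro ⟨w, v⟩
    simp only [LinearMap.prodMap_apply, LinearEquiv.conj_apply, LinearMap.comp_apply,
      LinearEquiv.coe_coe, LinearEquiv.symm_symm]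
    rw [eq_comm, LinearEquiv.symm_apply_eq]
    rw [he, Submodule.coe_prodEquivOfIsCompl', Submodule.coe_prodEquivOfIsCompl']
    simp only [hF, hG, LinearMap.restrict_coe_apply, map_add]
  have hMbB : LinearMap.toMatrix b b φ = Matrix.fromBlocks Bm 0 0 Nm := by
    have hmap : LinearMap.toMatrix b b φ
        = LinearMap.toMatrix (bW.prod bV) (bW.prod bV) (e.symm.conj φ) := by
      ext i j
      simp [LinearMap.toMatrix_apply, hb, Basis.map_apply, LinearEquiv.conj_apply]
    rw [hmap, ← hψ, LinearMap.toMatrix_prodMap]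
  have hMbb : LinearMap.toMatrix bb bb φ
      = Matrix.reindex eqv eqv (Matrix.fromBlocks Bm 0 0 Nm) := by
    rw [← hMbB]
    ext i j
    simp [LinearMap.toMatrix_apply, hbb, Basis.repr_reindex_apply, Basis.reindex_apply,
      Matrix.reindex_apply, Matrix.submatrix_apply]
  refine ⟨std.toMatrix bb, bb.toMatrix std, Bm, Nm, ?_, ?_, ?_, ?_, ?_⟩
  · exact Basis.toMatrix_mul_toMatrix_flip std bb
  · exact Basis.toMatrix_mul_toMatrix_flip bb std
  · rw [hBm, LinearMap.det_toMatrix]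
    exact isUnit_iff_ne_zero.mpr hFdet
  · refine ⟨n, ?_⟩
    have : Nm ^ n = LinearMap.toMatrix bV bV (G ^ n) := by
      rw [hNm]
      exact (map_pow (LinearMap.toMatrixAlgEquiv bV) G n).symm
    rw [this, hGn, LinearEquiv.map_zero]
  · rw [← hMbb, basis_toMatrix_mul_linearMap_toMatrix_mul_basis_toMatrix std bb std bb, hφ,
      LinearMap.toMatrix_toLin]




/-- Quasi-Weierstraß normal form: for a regular matrix pair `(M₀, M₁)` (i.e.
`det(zM₀+M₁)` is not identically zero) there exist invertible `P, Q`, a number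
`k ∈ {0,…,n}`, a matrix `C ∈ ℂ^{k×k}` and a nilpotent `N ∈ ℂ^{(n−k)×(n−k)}` such that
`P M₀ Q = diag(1, N)` and `P M₁ Q = diag(C, 1)` in block form. -/
theorem quasi_weierstrass_normal_form (n : ℕ) (M₀ M₁ : Matrix (Fin n) (Fin n) ℂ)
    (hreg : ∃ z : ℂ, (z • M₀ + M₁).det ≠ 0) :
    ∃ (k : ℕ) (hk : k ≤ n) (P Q : Matrix (Fin n) (Fin n) ℂ)
      (C : Matrix (Fin k) (Fin k) ℂ) (N : Matrix (Fin (n - k)) (Fin (n - k)) ℂ),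
      IsUnit P ∧ IsUnit Q ∧ IsNilpotent N ∧
      P * M₀ * Q = Matrix.reindex (finSumFinEquiv.trans (finCongr (Nat.add_sub_cancel' hk)))
        (finSumFinEquiv.trans (finCongr (Nat.add_sub_cancel' hk)))
        (Matrix.fromBlocks 1 0 0 N) ∧
      P * M₁ * Q = Matrix.reindex (finSumFinEquiv.trans (finCongr (Nat.add_sub_cancel' hk)))
        (finSumFinEquiv.trans (finCongr (Nat.add_sub_cancel' hk)))
        (Matrix.fromBlocks C 0 0 1) := by
  classical
  obtain ⟨z, hz⟩ := hreg
  set A : Matrix (Fin n) (Fin n) ℂ := z • M₀ + M₁ with hA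
  have hAu : IsUnit A.det := isUnit_iff_ne_zero.mpr hz
  set T : Matrix (Fin n) (Fin n) ℂ := A⁻¹ * M₀ with hT
  have hM0 : M₀ = A * T := by
    rw [hT, Matrix.mul_nonsing_inv_cancel_left _ _ hAu]
  have hM1 : M₁ = A * (1 - z • T) := by
    rw [Matrix.mul_sub, mul_one, Matrix.mul_smul, ← hM0, hA, add_sub_cancel_left]
  obtain ⟨k, hk, S, S', Bm, Nm, hSS', hS'S, hBu, hNnil, hTdec⟩ := fitting_matrix n T
  set eqv : (Fin k ⊕ Fin (n - k)) ≃ Fin n :=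
    finSumFinEquiv.trans (finCongr (Nat.add_sub_cancel' hk)) with heqv
  set R : Matrix (Fin k ⊕ Fin (n - k)) (Fin k ⊕ Fin (n - k)) ℂ ≃ₐ[ℂ] Matrix (Fin n) (Fin n) ℂ :=
    Matrix.reindexAlgEquiv ℂ ℂ eqv with hR
  have hRapp : ∀ M, Matrix.reindex eqv eqv M = R M := fun M => rfl
  set u : Matrix (Fin (n - k)) (Fin (n - k)) ℂ := 1 - z • Nm with hu
  have huu : IsUnit u := ((hNnil.smul z).isUnit_one_sub)
  have hud : IsUnit u.det := (Matrix.isUnit_iff_isUnit_det u).mp huu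
  set P : Matrix (Fin n) (Fin n) ℂ := R (Matrix.fromBlocks Bm⁻¹ 0 0 u⁻¹) * S' * A⁻¹ with hP
  have hMb : T = S * R (Matrix.fromBlocks Bm 0 0 Nm) * S' := hTdec
  have hRmulinv : R (Matrix.fromBlocks Bm⁻¹ 0 0 u⁻¹) * R (Matrix.fromBlocks Bm 0 0 u) = 1 := by
    rw [← _root_.map_mul, Matrix.fromBlocks_multiply]
    simp [Matrix.nonsing_inv_mul _ hBu, Matrix.nonsing_inv_mul _ hud, Matrix.fromBlocks_one]
  -- units
  have hSu : IsUnit S := ((Matrix.isUnit_iff_isUnit_det _).mpr (Matrix.isUnit_det_of_right_inverse hSS'))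
  have hS'u : IsUnit S' := ((Matrix.isUnit_iff_isUnit_det _).mpr (Matrix.isUnit_det_of_right_inverse hS'S))
  have hAiu : IsUnit A⁻¹ := ((Matrix.isUnit_iff_isUnit_det _).mpr (Matrix.isUnit_det_of_right_inverse (Matrix.nonsing_inv_mul _ hAu)))
  have hPu : IsUnit P := (((Matrix.isUnit_iff_isUnit_det _).mpr (Matrix.isUnit_det_of_right_inverse hRmulinv)).mul hS'u).mul hAiu
  -- nilpotent N
  have hcomm : Commute u⁻¹ Nm := by
    have h1 : Nm * u = u * Nm := by
      rw [hu, Matrix.mul_sub, Matrix.sub_mul, mul_one, one_mul, Matrix.mul_smul, Matrix.smul_mul]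
    show u⁻¹ * Nm = Nm * u⁻¹
    calc u⁻¹ * Nm = u⁻¹ * (Nm * u) * u⁻¹ := by
          rw [mul_assoc u⁻¹ (Nm * u) u⁻¹, mul_assoc Nm u u⁻¹, Matrix.mul_nonsing_inv _ hud,
            mul_one]
      _ = u⁻¹ * (u * Nm) * u⁻¹ := by rw [h1]
      _ = Nm * u⁻¹ := by rw [← mul_assoc u⁻¹ u Nm, Matrix.nonsing_inv_mul _ hud, one_mul]
  have hNnil' : IsNilpotent (u⁻¹ * Nm) := hcomm.isNilpotent_mul_left hNnil
  refine ⟨k, hk, P, S, Bm⁻¹ * (1 - z • Bm), u⁻¹ * Nm, hPu, hSu, hNnil', ?_, ?_⟩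
  · rw [hM0, hP]
    calc R (Matrix.fromBlocks Bm⁻¹ 0 0 u⁻¹) * S' * A⁻¹ * (A * T) * S
        = R (Matrix.fromBlocks Bm⁻¹ 0 0 u⁻¹) * S' * (A⁻¹ * (A * T) * S) := by
          simp only [Matrix.mul_assoc]
      _ = R (Matrix.fromBlocks Bm⁻¹ 0 0 u⁻¹) * S' * (T * S) := by
          rw [Matrix.nonsing_inv_mul_cancel_left _ _ hAu]
      _ = R (Matrix.fromBlocks Bm⁻¹ 0 0 u⁻¹) * (S' * S * (R (Matrix.fromBlocks Bm 0 0 Nm)) * (S' * S)) := by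
          rw [hMb]; simp only [Matrix.mul_assoc]
      _ = R (Matrix.fromBlocks Bm⁻¹ 0 0 u⁻¹) * R (Matrix.fromBlocks Bm 0 0 Nm) := by
          rw [hS'S, one_mul, mul_one]
      _ = Matrix.reindex eqv eqv (Matrix.fromBlocks 1 0 0 (u⁻¹ * Nm)) := by
          rw [hRapp, ← _root_.map_mul, Matrix.fromBlocks_multiply]
          simp [Matrix.nonsing_inv_mul _ hBu]
  · rw [hM1, hP]
    have hstep : (1 - z • T) * S = S * (1 - z • R (Matrix.fromBlocks Bm 0 0 Nm)) := by
      rw [Matrix.sub_mul, Matrix.mul_sub, one_mul, mul_one, Matrix.smul_mul, Matrix.mul_smul, hMb]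
      congr 1
      simp only [Matrix.mul_assoc, hS'S, mul_one]
    calc R (Matrix.fromBlocks Bm⁻¹ 0 0 u⁻¹) * S' * A⁻¹ * (A * (1 - z • T)) * S
        = R (Matrix.fromBlocks Bm⁻¹ 0 0 u⁻¹) * S' * (A⁻¹ * (A * ((1 - z • T) * S))) := by
          simp only [Matrix.mul_assoc]
      _ = R (Matrix.fromBlocks Bm⁻¹ 0 0 u⁻¹) * S' * ((1 - z • T) * S) := by
          rw [Matrix.nonsing_inv_mul_cancel_left _ _ hAu]
      _ = R (Matrix.fromBlocks Bm⁻¹ 0 0 u⁻¹) * (S' * S * (1 - z • R (Matrix.fromBlocks Bm 0 0 Nm))) := by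
          rw [hstep]; simp only [Matrix.mul_assoc]
      _ = R (Matrix.fromBlocks Bm⁻¹ 0 0 u⁻¹) * R (Matrix.fromBlocks (1 - z • Bm) 0 0 u) := by
          rw [hS'S, one_mul]
          congr 1
          have hsm : ∀ (c : ℂ) (X : Matrix (Fin k ⊕ Fin (n - k)) (Fin k ⊕ Fin (n - k)) ℂ),
              R (c • X) = c • R X := fun c X => by
            simp [hR, Matrix.reindexAlgEquiv_apply, Matrix.reindex_apply, Matrix.submatrix_smul]
          rw [show (1 : Matrix (Fin n) (Fin n) ℂ) - z • R (Matrix.fromBlocks Bm 0 0 Nm)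
              = R (1 - z • Matrix.fromBlocks Bm 0 0 Nm) by
            rw [_root_.map_sub, _root_.map_one, hsm]]
          congr 1
          rw [← Matrix.fromBlocks_one, Matrix.fromBlocks_smul]
          ext (i|i) (j|j) <;> simp [Matrix.fromBlocks, hu]
      _ = Matrix.reindex eqv eqv (Matrix.fromBlocks (Bm⁻¹ * (1 - z • Bm)) 0 0 1) := by
          rw [hRapp, ← _root_.map_mul, Matrix.fromBlocks_multiply]
          simp [Matrix.nonsing_inv_mul _ hud]
end
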